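/- Let A ⊆ ℕ and suppose that for every n ≥ 1 the sumset Σ_n(A) does not strongly contain arbitrarily long arithmetic progressions (i.e. A is ap*-sparse). Then A is δ̲-sparse: for every n ≥ 1, the lower asymptotic density of Σ_n(A) is 0. -/

import Mathlib

open Filter

/-- The `k`-fold sumset `X + ⋯ + X` (`k` times) of a set of naturals. -/
def kFoldN (X : Set ℕ) (k : ℕ) : Set ℕ :=
  {z : ℕ | ∃ f : Fin k → ℕ, (∀ i, f i ∈ X) ∧ z = ∑ i, f i}

/-- `Σ_n(X) = ⋃_{k=1}^n k(X)` for `X ⊆ ℕ`. -/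
def sigmaSumN (n : ℕ) (X : Set ℕ) : Set ℕ :=
  ⋃ k ∈ Finset.Icc 1 n, kFoldN X k

/-- The lower asymptotic density of a set of naturals:
`liminf_{n → ∞} |A ∩ {1,…,n}| / n`. -/
noncomputable def lowerDensity (A : Set ℕ) : ℝ :=
  Filter.liminf (fun n : ℕ => (Set.ncard (A ∩ Set.Icc 1 n) : ℝ) / n) Filter.atTop

/-- `S ⊆ ℤ` strongly contains an arithmetic progression of length `N`: there are `a` and
`d ≥ 1` with `a + i·d ∈ S` for `0 ≤ i < N` and `a − i·d ∉ S` for `1 ≤ i ≤ N − 1`. -/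
def StrongAPIn (S : Set ℤ) (N : ℕ) : Prop :=
  ∃ a d : ℤ, 1 ≤ d ∧ (∀ i : ℕ, i < N → a + i * d ∈ S) ∧
    ∀ i : ℕ, 1 ≤ i → i < N → a - i * d ∉ S

open scoped Classical

namespace SparseAux

/-- counting function: `|E ∩ [1, x]|`. -/
noncomputable def cnt (E : Set ℕ) (x : ℕ) : ℕ :=
  ((Finset.Icc 1 x).filter (fun i => i ∈ E)).card

/-- two-fold sumset of two sets. -/
def sumset2 (A B : Set ℕ) : Set ℕ := {z | ∃ u ∈ A, ∃ v ∈ B, z = u + v}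

lemma mem_sumset2 {A B : Set ℕ} {z : ℕ} :
    z ∈ sumset2 A B ↔ ∃ u ∈ A, ∃ v ∈ B, z = u + v := Iff.rfl

lemma zero_mem_kFoldN_zero (X : Set ℕ) : 0 ∈ kFoldN X 0 :=
  ⟨Fin.elim0, fun i => i.elim0, by simp⟩

lemma zero_mem_kFoldN {X : Set ℕ} (k : ℕ) (h0 : 0 ∈ X) : 0 ∈ kFoldN X k :=
  ⟨fun _ => 0, fun _ => h0, by simp⟩

lemma mem_kFoldN_zero {X : Set ℕ} {z : ℕ} (hz : z ∈ kFoldN X 0) : z = 0 := by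
  obtain ⟨f, -, rfl⟩ := hz; simp

lemma mem_kFoldN_one {X : Set ℕ} {z : ℕ} : z ∈ kFoldN X 1 ↔ z ∈ X := by
  constructor
  · rintro ⟨f, hf, rfl⟩; simpa using hf 0
  · intro hz; exact ⟨fun _ => z, fun _ => hz, by simp⟩

lemma add_mem_kFoldN {X : Set ℕ} {a b u v : ℕ} (hu : u ∈ kFoldN X a) (hv : v ∈ kFoldN X b) :
    u + v ∈ kFoldN X (a + b) := by
  obtain ⟨f, hf, rfl⟩ := hu; obtain ⟨g, hg, rfl⟩ := hv
  refine ⟨Fin.append f g, ?_, ?_⟩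
  · intro i
    refine Fin.addCases (fun j => ?_) (fun j => ?_) i
    · rw [Fin.append_left]; exact hf j
    · rw [Fin.append_right]; exact hg j
  · rw [Fin.sum_univ_add]
    simp [Fin.append_left, Fin.append_right]

lemma kFoldN_add_split {X : Set ℕ} {a b z : ℕ} (hz : z ∈ kFoldN X (a + b)) :
    ∃ u ∈ kFoldN X a, ∃ v ∈ kFoldN X b, z = u + v := by
  obtain ⟨f, hf, rfl⟩ := hz
  exact ⟨∑ i : Fin a, f (Fin.castAdd b i), ⟨_, fun i => hf _, rfl⟩,
         ∑ i : Fin b, f (Fin.natAdd a i), ⟨_, fun i => hf _, rfl⟩, Fin.sum_univ_add f⟩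

lemma kFoldN_le {X : Set ℕ} (h0 : 0 ∈ X) {a b : ℕ} (hab : a ≤ b) : kFoldN X a ⊆ kFoldN X b := by
  intro z hz
  obtain ⟨c, rfl⟩ := Nat.exists_eq_add_of_le hab
  simpa using add_mem_kFoldN hz (zero_mem_kFoldN c h0)

lemma kFoldN_comp {X : Set ℕ} {a : ℕ} :
    ∀ {b z : ℕ}, z ∈ kFoldN (kFoldN X a) b → z ∈ kFoldN X (b * a) := by
  intro b
  induction b with
  | zero => intro z hz; rw [mem_kFoldN_zero hz]; simpa using zero_mem_kFoldN_zero X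
  | succ b ih =>
    intro z hz
    obtain ⟨u, hu, v, hv, rfl⟩ := kFoldN_add_split hz
    have hv' : v ∈ kFoldN X a := mem_kFoldN_one.1 hv
    have := add_mem_kFoldN (ih hu) hv'
    rwa [show b * a + a = (b + 1) * a by ring] at this

lemma kFoldN_dvd {X : Set ℕ} {g : ℕ} (hX : ∀ c ∈ X, g ∣ c) {h z : ℕ}
    (hz : z ∈ kFoldN X h) : g ∣ z := by
  obtain ⟨f, hf, rfl⟩ := hz
  exact Finset.dvd_sum fun i _ => hX _ (hf i)

lemma kFoldN_div {X : Set ℕ} {g : ℕ} (hX : ∀ c ∈ X, g ∣ c) {h z : ℕ}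
    (hz : z ∈ kFoldN X h) : ∃ w, z = g * w ∧ w ∈ kFoldN {x | g * x ∈ X} h := by
  obtain ⟨f, hf, rfl⟩ := hz
  refine ⟨∑ i, f i / g, ?_, ⟨fun i => f i / g, fun i => ?_, rfl⟩⟩
  · rw [Finset.mul_sum]
    exact (Finset.sum_congr rfl fun i _ => (Nat.mul_div_cancel' (hX _ (hf i))).symm)
  · show g * (f i / g) ∈ X
    rw [Nat.mul_div_cancel' (hX _ (hf i))]; exact hf i

lemma mem_sigmaSumN {n : ℕ} {X : Set ℕ} {z : ℕ} :
    z ∈ sigmaSumN n X ↔ ∃ k, 1 ≤ k ∧ k ≤ n ∧ z ∈ kFoldN X k := by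
  simp [sigmaSumN, Finset.mem_Icc, and_assoc]

lemma sigmaSumN_add_mem {A : Set ℕ} {a b x y : ℕ} (hx : x ∈ sigmaSumN a A)
    (hy : y ∈ sigmaSumN b A) : x + y ∈ sigmaSumN (a + b) A := by
  rw [mem_sigmaSumN] at hx hy ⊢
  obtain ⟨i, hi1, hia, hxi⟩ := hx
  obtain ⟨j, hj1, hjb, hyj⟩ := hy
  exact ⟨i + j, by omega, by omega, add_mem_kFoldN hxi hyj⟩

lemma kFoldN_sigma_sub {A : Set ℕ} {n : ℕ} :
    ∀ {M : ℕ}, 1 ≤ M → ∀ {z : ℕ}, z ∈ kFoldN (sigmaSumN n A) M → z ∈ sigmaSumN (M * n) A := by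
  intro M
  induction M with
  | zero => omega
  | succ M ih =>
    intro _ z hz
    rcases Nat.eq_zero_or_pos M with rfl | hM
    · have : z ∈ sigmaSumN n A := mem_kFoldN_one.1 hz
      rwa [show (0 + 1) * n = n from by ring]
    · obtain ⟨u, hu, v, hv, rfl⟩ := kFoldN_add_split hz
      have h1 := ih hM hu
      have h2 : v ∈ sigmaSumN n A := mem_kFoldN_one.1 hv
      have := sigmaSumN_add_mem h1 h2
      rwa [show (M + 1) * n = M * n + n by ring]

/- counting lemmas -/

lemma cnt_le (E : Set ℕ) (x : ℕ) : cnt E x ≤ x := by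
  have h := Finset.card_filter_le (Finset.Icc 1 x) (fun i => i ∈ E)
  simpa [cnt, Nat.card_Icc] using h

lemma cnt_zero (E : Set ℕ) : cnt E 0 = 0 := by
  simp [cnt]

lemma cnt_mono_set {E F : Set ℕ} (h : ∀ z ∈ E, z ∈ F) (x : ℕ) : cnt E x ≤ cnt F x := by
  apply Finset.card_le_card
  intro z hz
  rw [Finset.mem_filter] at hz ⊢
  exact ⟨hz.1, h z hz.2⟩

lemma cnt_succ (E : Set ℕ) (x : ℕ) :
    cnt E (x + 1) = cnt E x + (if x + 1 ∈ E then 1 else 0) := by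
  unfold cnt
  have hIcc : Finset.Icc 1 (x + 1) = insert (x + 1) (Finset.Icc 1 x) := by
    ext z; simp only [Finset.mem_Icc, Finset.mem_insert]; omega
  rw [hIcc, Finset.filter_insert]
  split
  · rw [Finset.card_insert_of_notMem]
    intro hmem
    have := (Finset.mem_filter.1 hmem).1
    rw [Finset.mem_Icc] at this; omega
  · simp

lemma cnt_full {E : Set ℕ} {x : ℕ} (h : ∀ i, 1 ≤ i → i ≤ x → i ∈ E) : cnt E x = x := by
  unfold cnt
  rw [Finset.filter_true_of_mem (fun i hi => h i (Finset.mem_Icc.1 hi).1 (Finset.mem_Icc.1 hi).2)]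
  simp [Nat.card_Icc]

lemma cnt_split (E : Set ℕ) {a x : ℕ} (hax : a ≤ x) :
    cnt E x = cnt E a + ((Finset.Icc (a + 1) x).filter (fun i => i ∈ E)).card := by
  unfold cnt
  have hIcc : Finset.Icc 1 x = Finset.Icc 1 a ∪ Finset.Icc (a + 1) x := by
    ext z; simp only [Finset.mem_Icc, Finset.mem_union]; omega
  rw [hIcc, Finset.filter_union, Finset.card_union_of_disjoint]
  rw [Finset.disjoint_left]
  intro z hz1 hz2
  have h1 := (Finset.mem_filter.1 hz1).1
  have h2 := (Finset.mem_filter.1 hz2).1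
  rw [Finset.mem_Icc] at h1 h2; omega

lemma cnt_pos_elt {E : Set ℕ} {x : ℕ} (h : 0 < cnt E x) : ∃ c ∈ E, 1 ≤ c := by
  obtain ⟨c, hc⟩ := Finset.card_pos.1 h
  rw [Finset.mem_filter, Finset.mem_Icc] at hc
  exact ⟨c, hc.2, hc.1.1⟩

/- Schnirelmann-type machinery -/

lemma cnt_shift_ge {A B : Set ℕ} {a x : ℕ} (haA : a ∈ A) (hax : a ≤ x) :
    cnt (sumset2 A B) a + cnt B (x - a) ≤ cnt (sumset2 A B) x := by
  rw [cnt_split (sumset2 A B) hax]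
  have hle : cnt B (x - a) ≤
      ((Finset.Icc (a + 1) x).filter (fun i => i ∈ sumset2 A B)).card := by
    apply Finset.card_le_card_of_injOn (fun v => a + v)
    · intro v hv
      rw [Finset.mem_coe, Finset.mem_filter, Finset.mem_Icc] at hv
      simp only [Finset.mem_coe, Finset.mem_filter, Finset.mem_Icc]
      exact ⟨by omega, a, haA, v, hv.2, rfl⟩
    · intro u _ v _ huv
      simp only at huv
      omega
  omega

lemma boost_aux {A B : Set ℕ} {b : ℝ} (hb0 : 0 ≤ b) (hb1 : b ≤ 1)
    (h0A : 0 ∈ A) (h0B : 0 ∈ B)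
    (hB : ∀ x : ℕ, 1 ≤ x → b * x ≤ cnt B x) :
    ∀ x : ℕ, (cnt A x : ℝ) + b * ((x : ℝ) - cnt A x) ≤ cnt (sumset2 A B) x := by
  intro x
  induction x using Nat.strong_induction_on with
  | _ x ih =>
  rcases Nat.eq_zero_or_pos x with rfl | hx
  · simp [cnt_zero]
  obtain ⟨x', rfl⟩ : ∃ x', x = x' + 1 := ⟨x - 1, by omega⟩
  by_cases hA : ((Finset.Icc 1 (x' + 1)).filter (fun i => i ∈ A)).Nonempty
  case neg =>
    have hAx : cnt A (x' + 1) = 0 := by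
      unfold cnt
      rw [Finset.not_nonempty_iff_eq_empty] at hA
      rw [hA]; rfl
    have hmono : cnt B (x' + 1) ≤ cnt (sumset2 A B) (x' + 1) :=
      cnt_mono_set (fun v hv => mem_sumset2.2 ⟨0, h0A, v, hv, (zero_add v).symm⟩) _
    have h1 := hB (x' + 1) (by omega)
    have h2 : (cnt B (x' + 1) : ℝ) ≤ cnt (sumset2 A B) (x' + 1) := by exact_mod_cast hmono
    push_cast at h1
    rw [hAx]
    push_cast
    linarith
  case pos =>
    set P := (Finset.Icc 1 (x' + 1)).filter (fun i => i ∈ A) with hP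
    set a := P.max' hA with ha
    have haP : a ∈ P := P.max'_mem hA
    have haA : a ∈ A := (Finset.mem_filter.1 haP).2
    have ha1 : 1 ≤ a ∧ a ≤ x' + 1 := Finset.mem_Icc.1 (Finset.mem_filter.1 haP).1
    have hcntAeq : cnt A (x' + 1) = cnt A a := by
      apply le_antisymm
      · apply Finset.card_le_card
        intro z hz
        rw [Finset.mem_filter, Finset.mem_Icc] at hz ⊢
        have hza : z ≤ a := P.le_max' z
          (by rw [hP, Finset.mem_filter, Finset.mem_Icc]; exact ⟨⟨hz.1.1, hz.1.2⟩, hz.2⟩)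
        exact ⟨⟨hz.1.1, hza⟩, hz.2⟩
      · apply Finset.card_le_card
        intro z hz
        rw [Finset.mem_filter, Finset.mem_Icc] at hz ⊢
        exact ⟨⟨hz.1.1, by omega⟩, hz.2⟩
    rcases eq_or_lt_of_le ha1.2 with heq | hlt
    · have hxA : x' + 1 ∈ A := heq ▸ haA
      have hxE : x' + 1 ∈ sumset2 A B := mem_sumset2.2 ⟨x' + 1, hxA, 0, h0B, (add_zero _).symm⟩
      have hEeq : cnt (sumset2 A B) (x' + 1) = cnt (sumset2 A B) x' + 1 := by
        rw [cnt_succ, if_pos hxE]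
      have hAeq : cnt A (x' + 1) = cnt A x' + 1 := by
        rw [cnt_succ, if_pos hxA]
      have hihx := ih x' (by omega)
      have hc1 : (cnt A x' : ℝ) ≤ x' := by exact_mod_cast cnt_le A x'
      rw [hEeq, hAeq]
      push_cast
      push_cast at hihx
      nlinarith
    · have hax' : a ≤ x' := by omega
      have hsplit := cnt_shift_ge (B := B) haA (show a ≤ x' + 1 by omega)
      have hiha := ih a (by omega)
      have hBx := hB (x' + 1 - a) (by omega)
      have hcast : ((x' + 1 - a : ℕ) : ℝ) = (x' : ℝ) + 1 - a := by
        push_cast [Nat.cast_sub (show a ≤ x' + 1 by omega)]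
        ring
      have hsplit' : (cnt (sumset2 A B) a : ℝ) + cnt B (x' + 1 - a) ≤
          cnt (sumset2 A B) (x' + 1) := by exact_mod_cast hsplit
      rw [hcntAeq]
      rw [hcast] at hBx
      push_cast at hiha hsplit' ⊢
      nlinarith

lemma boost {A B : Set ℕ} {a b : ℝ} (hb0 : 0 ≤ b) (hb1 : b ≤ 1)
    (h0A : 0 ∈ A) (h0B : 0 ∈ B)
    (hA : ∀ x : ℕ, 1 ≤ x → a * x ≤ cnt A x) (hB : ∀ x : ℕ, 1 ≤ x → b * x ≤ cnt B x) :
    ∀ x : ℕ, 1 ≤ x → (a + b - a * b) * x ≤ cnt (sumset2 A B) x := by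
  intro x hx
  have h1 := boost_aux hb0 hb1 h0A h0B hB x
  have h2 := hA x hx
  have h3 : (cnt A x : ℝ) ≤ x := by exact_mod_cast cnt_le A x
  nlinarith [mul_le_mul_of_nonneg_left h2 (show (0:ℝ) ≤ 1 - b by linarith)]

lemma complete {F : Set ℕ} (h0F : 0 ∈ F)
    (hF : ∀ x : ℕ, 1 ≤ x → (x : ℝ) ≤ 2 * cnt F x) :
    ∀ y : ℕ, ∃ u ∈ F, ∃ v ∈ F, y = u + v := by
  intro y
  rcases Nat.eq_zero_or_pos y with rfl | hy
  · exact ⟨0, h0F, 0, h0F, rfl⟩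
  by_cases hyF : y ∈ F
  · exact ⟨y, hyF, 0, h0F, (add_zero y).symm⟩
  · have hcnt : (y : ℕ) ≤ 2 * cnt F y := by exact_mod_cast hF y hy
    obtain ⟨y', rfl⟩ : ∃ y', y = y' + 1 := ⟨y - 1, by omega⟩
    have hcnt' : cnt F (y' + 1) = cnt F y' := by
      rw [cnt_succ, if_neg hyF, add_zero]
    set U := (Finset.Icc 1 y').filter (fun i => i ∈ F) with hU
    set V := (Finset.Icc 1 y').filter (fun i => (y' + 1) - i ∈ F) with hV
    have hUcard : U.card = cnt F y' := rfl
    have hVcard : V.card = cnt F y' := by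
      rw [hV]
      show _ = cnt F y'
      unfold cnt
      apply Finset.card_nbij (fun i => (y' + 1) - i)
      · intro z hz
        rw [Finset.mem_coe, Finset.mem_filter, Finset.mem_Icc] at hz
        simp only [Finset.mem_coe, Finset.mem_filter, Finset.mem_Icc]
        exact ⟨⟨by omega, by omega⟩, hz.2⟩
      · intro u hu v hv huv
        simp only [Finset.mem_coe, Finset.mem_filter, Finset.mem_Icc] at hu hv
        simp only at huv
        omega
      · intro z hz
        simp only [Finset.mem_coe, Finset.mem_filter, Finset.mem_Icc] at hz
        refine ⟨(y' + 1) - z, ?_, ?_⟩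
        · simp only [Finset.mem_coe, Finset.mem_filter, Finset.mem_Icc]
          constructor
          · omega
          · rw [show y' + 1 - (y' + 1 - z) = z by omega]
            exact hz.2
        · simp only
          omega
    have hsub : U ∪ V ⊆ Finset.Icc 1 y' :=
      Finset.union_subset (Finset.filter_subset _ _) (Finset.filter_subset _ _)
    have h1 := Finset.card_inter_add_card_union U V
    have h2 : (U ∪ V).card ≤ y' := by
      have := Finset.card_le_card hsub
      simpa [Nat.card_Icc] using this
    have h3 : 0 < (U ∩ V).card := by omega
    obtain ⟨c, hc⟩ := Finset.card_pos.1 h3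
    rw [Finset.mem_inter] at hc
    have hcU := hc.1
    have hcV := hc.2
    rw [hU, Finset.mem_filter, Finset.mem_Icc] at hcU
    rw [hV, Finset.mem_filter, Finset.mem_Icc] at hcV
    exact ⟨c, hcU.2, (y' + 1) - c, hcV.2, by omega⟩

end SparseAux

set_option maxHeartbeats 2000000 in
/-- If `A ⊆ ℕ` is `ap*`-sparse (no `Σ_n(A)` strongly contains arbitrarily long
arithmetic progressions), then `A` is `δ̲`-sparse: every `Σ_n(A)` has lower density `0`. -/
theorem lowerDensity_sparse_of_apstar_sparse (A : Set ℕ)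
    (h : ∀ n : ℕ, 1 ≤ n →
      ¬ ∀ N : ℕ, StrongAPIn ((fun m : ℕ => (m : ℤ)) '' sigmaSumN n A) N) :
    ∀ n : ℕ, 1 ≤ n → lowerDensity (sigmaSumN n A) = 0 := by
  intro n hn
  by_contra hne
  set S := sigmaSumN n A with hSdef
  set f : ℕ → ℝ := fun x => ((Set.ncard (S ∩ Set.Icc 1 x) : ℝ)) / x with hfdef
  have hld : lowerDensity S = Filter.liminf f Filter.atTop := rfl
  have hfcnt : ∀ x : ℕ, Set.ncard (S ∩ Set.Icc 1 x) = SparseAux.cnt S x := by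
    intro x
    have hset : (S ∩ Set.Icc 1 x) = ((Finset.Icc 1 x).filter (fun i => i ∈ S) : Finset ℕ) := by
      ext z
      simp only [Set.mem_inter_iff, Set.mem_Icc, Finset.coe_filter, Set.mem_setOf_eq,
        Finset.mem_Icc]
      tauto
    rw [hset, Set.ncard_coe_finset]
    rfl
  have hf0 : ∀ x, 0 ≤ f x := fun x => div_nonneg (Nat.cast_nonneg _) (Nat.cast_nonneg _)
  have hf1 : ∀ x, f x ≤ 1 := by
    intro x
    rcases Nat.eq_zero_or_pos x with rfl | hx
    · simp [hfdef]
    · rw [hfdef]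
      simp only
      rw [div_le_one (by exact_mod_cast hx), hfcnt]
      exact_mod_cast SparseAux.cnt_le S x
  have hBddAbove : Filter.IsBoundedUnder (· ≤ ·) Filter.atTop f :=
    ⟨1, Filter.eventually_map.2 (Filter.Eventually.of_forall hf1)⟩
  have hBddBelow : Filter.IsBoundedUnder (· ≥ ·) Filter.atTop f :=
    ⟨0, Filter.eventually_map.2 (Filter.Eventually.of_forall hf0)⟩
  have hα0 : 0 ≤ lowerDensity S := by
    rw [hld]
    exact Filter.le_liminf_of_le hBddAbove.isCoboundedUnder_ge (Filter.Eventually.of_forall hf0)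
  have hαpos : 0 < lowerDensity S := lt_of_le_of_ne hα0 (Ne.symm hne)
  set α := lowerDensity S with hα
  have hev : ∀ᶠ x in Filter.atTop, α / 2 < f x := by
    apply Filter.eventually_lt_of_lt_liminf
    · rw [← hld]; linarith
    · exact hBddBelow
  obtain ⟨x0, hx0⟩ := Filter.eventually_atTop.1 (hev.and (Filter.eventually_ge_atTop 1))
  have hScnt : ∀ x : ℕ, x0 ≤ x → α / 2 * x ≤ (SparseAux.cnt S x : ℝ) := by
    intro x hx
    obtain ⟨h1, h2⟩ := hx0 x hx
    rw [hfdef] at h1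
    simp only at h1
    rw [hfcnt] at h1
    have hxpos : (0 : ℝ) < x := by exact_mod_cast h2
    linarith [(lt_div_iff₀ hxpos).1 h1]
  have hSne : S.Nonempty := by
    have hx := hScnt (max x0 1) (le_max_left _ _)
    have hx1R : (1:ℝ) ≤ ((max x0 1 : ℕ) : ℝ) := by exact_mod_cast le_max_right x0 1
    have hposcnt : 0 < SparseAux.cnt S (max x0 1) := by
      by_contra hc
      push_neg at hc
      have h0 : SparseAux.cnt S (max x0 1) = 0 := by omega
      rw [h0] at hx
      push_cast at hx hx1R
      nlinarith
    obtain ⟨c, hcS, -⟩ := SparseAux.cnt_pos_elt hposcnt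
    exact ⟨c, hcS⟩
  set s0 := sInf S with hs0def
  have hs0S : s0 ∈ S := Nat.sInf_mem hSne
  set C : Set ℕ := {c | s0 + c ∈ S} with hCdef
  have h0C : (0:ℕ) ∈ C := by
    show s0 + 0 ∈ S
    simpa using hs0S
  have hCcnt : ∀ x : ℕ, SparseAux.cnt S (s0 + x) ≤ s0 + SparseAux.cnt C x := by
    intro x
    rw [SparseAux.cnt_split S (show s0 ≤ s0 + x by omega)]
    have h1 : SparseAux.cnt S s0 ≤ s0 := SparseAux.cnt_le S s0
    have h2 : ((Finset.Icc (s0+1) (s0+x)).filter (fun i => i ∈ S)).card ≤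
        SparseAux.cnt C x := by
      apply Finset.card_le_card_of_injOn (fun z => z - s0)
      · intro z hz
        rw [Finset.mem_coe, Finset.mem_filter, Finset.mem_Icc] at hz
        simp only [Finset.mem_coe, Finset.mem_filter, Finset.mem_Icc]
        refine ⟨⟨by omega, by omega⟩, ?_⟩
        show s0 + (z - s0) ∈ S
        rw [show s0 + (z - s0) = z by omega]
        exact hz.2
      · intro u hu v hv huv
        simp only [Finset.mem_coe, Finset.mem_filter, Finset.mem_Icc] at hu hv
        simp only at huv
        omega
    omega
  -- the union of all folds of C
  set UC : Set ℕ := {z | ∃ m : ℕ, z ∈ kFoldN C m} with hUCdef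
  have hUCadd : ∀ {u v : ℕ}, u ∈ UC → v ∈ UC → u + v ∈ UC := by
    rintro u v ⟨mu, hu⟩ ⟨mv, hv⟩
    exact ⟨mu + mv, SparseAux.add_mem_kFoldN hu hv⟩
  have h0UC : (0:ℕ) ∈ UC := ⟨0, SparseAux.zero_mem_kFoldN_zero C⟩
  have hCUC : ∀ c ∈ C, c ∈ UC := fun c hc => ⟨1, SparseAux.mem_kFoldN_one.2 hc⟩
  -- C has a nonzero element
  obtain ⟨xb, hxb⟩ := exists_nat_ge ((s0 + 1) / (α / 4))
  have hCelt : ∃ c ∈ C, 1 ≤ c := by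
    set x := max x0 (max xb 1) with hxdef
    have hx0le : x0 ≤ x := le_max_left _ _
    have hxble : (xb:ℝ) ≤ x := by
      exact_mod_cast le_trans (le_max_left xb 1) (le_max_right x0 _)
    have hα4 : (0:ℝ) < α/4 := by linarith
    have hs01 : (s0 + 1 : ℝ) ≤ α/4 * x := by
      rw [div_le_iff₀ hα4] at hxb
      nlinarith
    have hcnt1 := hScnt (s0 + x) (by omega)
    have hCcnt1 := hCcnt x
    have hc1 : (SparseAux.cnt S (s0 + x) : ℝ) ≤ s0 + SparseAux.cnt C x := by
      exact_mod_cast hCcnt1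
    have hs0R : (0:ℝ) ≤ s0 := Nat.cast_nonneg s0
    have hxR : (0:ℝ) ≤ x := Nat.cast_nonneg x
    have hOne : (1:ℝ) ≤ SparseAux.cnt C x := by
      push_cast at hc1 hcnt1 ⊢
      nlinarith
    have : 0 < SparseAux.cnt C x := by exact_mod_cast lt_of_lt_of_le zero_lt_one hOne
    exact SparseAux.cnt_pos_elt this
  obtain ⟨c1, hc1C, hc11⟩ := hCelt
  set Dst : Set ℕ := {d | 1 ≤ d ∧ ∃ p, p ∈ UC ∧ p + d ∈ UC} with hDstdef
  have hDne : Dst.Nonempty := ⟨c1, hc11, 0, h0UC, by simpa using hCUC c1 hc1C⟩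
  set g := sInf Dst with hgdef
  have hgD : g ∈ Dst := Nat.sInf_mem hDne
  have hg1 : 1 ≤ g := hgD.1
  obtain ⟨p0, hp0UC, hp0gUC⟩ := hgD.2
  have hcombo : ∀ K j : ℕ, j ≤ K → K * p0 + j * g ∈ UC := by
    intro K
    induction K with
    | zero =>
      intro j hj
      have hj0 : j = 0 := by omega
      subst hj0
      simpa using h0UC
    | succ K ih =>
      intro j hj
      rcases Nat.lt_or_ge j (K + 1) with hlt | hge
      · have hmem := hUCadd (ih j (by omega)) hp0UC
        rwa [show K * p0 + j * g + p0 = (K+1) * p0 + j * g by ring] at hmem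
      · have hj' : j = K + 1 := by omega
        subst hj'
        have hmem := hUCadd (ih K le_rfl) hp0gUC
        rwa [show K * p0 + K * g + (p0 + g) = (K+1) * p0 + (K+1) * g by ring] at hmem
  have hmulc : ∀ c ∈ C, ∀ i : ℕ, i * c ∈ UC := by
    intro c hc i
    induction i with
    | zero => simpa using h0UC
    | succ i ih =>
      have := hUCadd ih (hCUC c hc)
      rwa [show i * c + c = (i+1) * c by ring] at this
  have hgdvd : ∀ c ∈ C, g ∣ c := by
    intro c hc
    rcases Nat.eq_zero_or_pos c with rfl | hcpos
    · exact dvd_zero g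
    have hepos : 0 < Nat.gcd g c := Nat.gcd_pos_of_pos_left c (by omega)
    have hbez := Nat.gcd_eq_gcd_ab g c
    set u : ℤ := Nat.gcdA g c with hudef
    set v : ℤ := Nat.gcdB g c with hvdef
    have hc1Z : (1:ℤ) ≤ (c:ℤ) := by exact_mod_cast hcpos
    have htabs : -u ≤ (u.natAbs : ℤ) := by
      rcases le_or_gt 0 u with hu | hu
      · have : (u.natAbs : ℤ) = u := Int.natAbs_of_nonneg hu
        omega
      · have : (u.natAbs : ℤ) = -u := by
          rw [Int.ofNat_natAbs_of_nonpos (le_of_lt hu)]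
        omega
    have htnn : (0:ℤ) ≤ (u.natAbs : ℤ) := Int.natCast_nonneg _
    have ha' : 0 ≤ u + (u.natAbs : ℤ) * c := by nlinarith
    have hbez2 : (Nat.gcd g c : ℤ) = g * (u + (u.natAbs : ℤ) * c) + c * (v - (u.natAbs : ℤ) * g) := by
      rw [hbez]; ring
    rcases le_or_gt 0 (v - (u.natAbs:ℤ) * g) with hb' | hb'
    · set Abig := (u + (u.natAbs:ℤ) * c).toNat with hAdef
      set Bbig := (v - (u.natAbs:ℤ) * g).toNat with hBdef
      have hA := Int.toNat_of_nonneg ha'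
      have hB := Int.toNat_of_nonneg hb'
      have hnatZ : (Nat.gcd g c : ℤ) = (g * Abig + c * Bbig : ℕ) := by
        push_cast
        rw [hA, hB]
        exact hbez2
      have hnat : Nat.gcd g c = Abig * g + Bbig * c := by
        have h' : Nat.gcd g c = g * Abig + c * Bbig := by exact_mod_cast hnatZ
        rw [h']; ring
      have hp1 : Abig * p0 ∈ UC := by
        have := hcombo Abig 0 (Nat.zero_le _)
        simpa using this
      have hp2 : Abig * p0 + Nat.gcd g c ∈ UC := by
        have hm := hUCadd (hcombo Abig Abig le_rfl) (hmulc c hc Bbig)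
        rwa [show Abig * p0 + Abig * g + Bbig * c = Abig * p0 + Nat.gcd g c by rw [hnat]; ring]
          at hm
      have heD : Nat.gcd g c ∈ Dst := ⟨hepos, Abig * p0, hp1, hp2⟩
      have hge := Nat.sInf_le heD
      have hle := Nat.gcd_le_left c (show 0 < g by omega)
      have hgeq : Nat.gcd g c = g := by omega
      have := Nat.gcd_dvd_right g c
      rwa [hgeq] at this
    · set Abig := (u + (u.natAbs:ℤ) * c).toNat with hAdef
      set Bbig := (-(v - (u.natAbs:ℤ) * g)).toNat with hBdef
      have hA := Int.toNat_of_nonneg ha'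
      have hB : (Bbig : ℤ) = -(v - (u.natAbs:ℤ) * g) := Int.toNat_of_nonneg (by omega)
      have hnatZ : ((Nat.gcd g c + Bbig * c : ℕ) : ℤ) = ((Abig * g : ℕ) : ℤ) := by
        push_cast
        rw [hA, hB]
        rw [hbez2]
        ring
      have hnat : Abig * g = Nat.gcd g c + Bbig * c := by
        have h' : Nat.gcd g c + Bbig * c = Abig * g := by exact_mod_cast hnatZ
        omega
      have hp1 : Abig * p0 + Bbig * c ∈ UC := by
        have h1 : Abig * p0 ∈ UC := by
          have := hcombo Abig 0 (Nat.zero_le _)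
          simpa using this
        exact hUCadd h1 (hmulc c hc Bbig)
      have hp2 : Abig * p0 + Bbig * c + Nat.gcd g c ∈ UC := by
        have hm2 := hcombo Abig Abig le_rfl
        rwa [show Abig * p0 + Abig * g = Abig * p0 + Bbig * c + Nat.gcd g c by rw [hnat]; ring]
          at hm2
      have heD : Nat.gcd g c ∈ Dst := ⟨hepos, Abig * p0 + Bbig * c, hp1, hp2⟩
      have hge := Nat.sInf_le heD
      have hle := Nat.gcd_le_left c (show 0 < g by omega)
      have hgeq : Nat.gcd g c = g := by omega
      have := Nat.gcd_dvd_right g c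
      rwa [hgeq] at this
  -- divide everything by g
  have hp0dvd : g ∣ p0 := by
    obtain ⟨mp, hmp⟩ := hp0UC
    exact SparseAux.kFoldN_dvd hgdvd hmp
  set C' : Set ℕ := {x | g * x ∈ C} with hC'def
  have h0C' : (0:ℕ) ∈ C' := by
    show g * 0 ∈ C
    simpa using h0C
  set q0 := p0 / g with hq0def
  have hp0eq : p0 = g * q0 := by
    rw [hq0def, Nat.mul_div_cancel' hp0dvd]
  obtain ⟨mP, hmP⟩ := hp0UC
  obtain ⟨wP, hwPeq, hwPmem⟩ := SparseAux.kFoldN_div hgdvd hmP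
  have hwPq : wP = q0 := by
    have : g * wP = g * q0 := by rw [← hwPeq, ← hp0eq]
    exact Nat.eq_of_mul_eq_mul_left (by omega) this
  obtain ⟨mQ, hmQ⟩ := hp0gUC
  obtain ⟨wQ, hwQeq, hwQmem⟩ := SparseAux.kFoldN_div hgdvd hmQ
  have hwQq : wQ = q0 + 1 := by
    have : g * wQ = g * (q0 + 1) := by
      rw [← hwQeq, Nat.mul_add, mul_one, ← hp0eq]
    exact Nat.eq_of_mul_eq_mul_left (by omega) this
  set h0 := max mP mQ with hh0def
  have hq0mem : q0 ∈ kFoldN C' h0 :=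
    SparseAux.kFoldN_le h0C' (le_max_left _ _) (hwPq ▸ hwPmem)
  have hq1mem : q0 + 1 ∈ kFoldN C' h0 :=
    SparseAux.kFoldN_le h0C' (le_max_right _ _) (hwQq ▸ hwQmem)
  -- counting transfer to C'
  have hC'cnt : ∀ x : ℕ, SparseAux.cnt C (g * x) = SparseAux.cnt C' x := by
    intro x
    unfold SparseAux.cnt
    refine (Finset.card_nbij (fun z => g * z) ?_ ?_ ?_).symm
    · intro z hz
      rw [Finset.mem_coe, Finset.mem_filter, Finset.mem_Icc] at hz
      simp only [Finset.mem_coe, Finset.mem_filter, Finset.mem_Icc]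
      refine ⟨⟨?_, ?_⟩, hz.2⟩
      · have := Nat.mul_le_mul hg1 hz.1.1
        omega
      · exact Nat.mul_le_mul_left g hz.1.2
    · intro a ha b hb hab
      simp only at hab
      exact Nat.eq_of_mul_eq_mul_left (by omega) hab
    · intro z hz
      simp only [Finset.mem_coe, Finset.mem_filter, Finset.mem_Icc] at hz
      obtain ⟨w, rfl⟩ := hgdvd z hz.2
      refine ⟨w, ?_, rfl⟩
      simp only [Finset.mem_coe, Finset.mem_filter, Finset.mem_Icc]
      refine ⟨⟨?_, ?_⟩, hz.2⟩
      · by_contra hw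
        push_neg at hw
        interval_cases w
        omega
      · exact Nat.le_of_mul_le_mul_left hz.1.2 (by omega)
  have hC'lb : ∀ x : ℕ, x0 ≤ x → α / 2 * x - s0 ≤ (SparseAux.cnt C' x : ℝ) := by
    intro x hx
    have hgx : x ≤ g * x := Nat.le_mul_of_pos_left x (by omega)
    have h1 := hScnt (s0 + g * x) (by omega)
    have h2 := hCcnt (g * x)
    have h2R : (SparseAux.cnt S (s0 + g * x) : ℝ) ≤ s0 + SparseAux.cnt C (g * x) := by
      exact_mod_cast h2
    rw [← hC'cnt x]
    have hgxR : (x:ℝ) ≤ ((g * x : ℕ) : ℝ) := by exact_mod_cast hgx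
    have hs0R : (0:ℝ) ≤ s0 := Nat.cast_nonneg s0
    push_cast at h1 h2R hgxR ⊢
    nlinarith
  -- the density constant
  set γ : ℝ := min (α / 4) (1 / 2) with hγdef
  have hγpos : 0 < γ := lt_min (by linarith) (by norm_num)
  have hγhalf : γ ≤ 1 / 2 := min_le_right _ _
  have hγ1 : γ ≤ 1 := by linarith
  have hγα : γ ≤ α / 4 := min_le_left _ _
  obtain ⟨xc, hxc⟩ := exists_nat_ge ((s0 : ℝ) / (α / 4))
  set x1 := max x0 xc with hx1def
  have hx1cnt : ∀ x : ℕ, x1 ≤ x → γ * x ≤ (SparseAux.cnt C' x : ℝ) := by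
    intro x hx
    have h1 := hC'lb x (le_trans (le_max_left _ _) hx)
    have hxcx : (xc:ℝ) ≤ x := by exact_mod_cast le_trans (le_max_right x0 xc) hx
    have hα4 : (0:ℝ) < α / 4 := by linarith
    have hs0le : (s0:ℝ) ≤ α / 4 * x := by
      rw [div_le_iff₀ hα4] at hxc
      nlinarith
    have hxR : (0:ℝ) ≤ x := Nat.cast_nonneg x
    nlinarith [mul_le_mul_of_nonneg_right hγα hxR]
  set k := max x1 1 with hkdef
  set D : Set ℕ := C' ∪ {z | z ≤ k} with hDdef
  have h0D : (0:ℕ) ∈ D := Set.mem_union_right _ (by show (0:ℕ) ≤ k; omega)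
  have hDcnt : ∀ x : ℕ, 1 ≤ x → γ * x ≤ (SparseAux.cnt D x : ℝ) := by
    intro x hx
    rcases le_or_gt x k with hxk | hxk
    · have hfull : SparseAux.cnt D x = x :=
        SparseAux.cnt_full (fun i h1 h2 => Set.mem_union_right _ (show i ≤ k by omega))
      rw [hfull]
      have hxR : (0:ℝ) ≤ x := Nat.cast_nonneg x
      nlinarith
    · have h1 := hx1cnt x (by omega)
      have h2 : SparseAux.cnt C' x ≤ SparseAux.cnt D x :=
        SparseAux.cnt_mono_set (fun z hz => Set.mem_union_left _ hz) x
      have h2R : (SparseAux.cnt C' x : ℝ) ≤ SparseAux.cnt D x := by exact_mod_cast h2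
      linarith
  -- iterate the Schnirelmann boost
  have hEs : ∀ t : ℕ, ∃ E : Set ℕ, 0 ∈ E ∧ (∀ z ∈ E, z ∈ kFoldN D (t+1)) ∧
      ∀ x : ℕ, 1 ≤ x → (1 - (1-γ)^(t+1)) * x ≤ (SparseAux.cnt E x : ℝ) := by
    intro t
    induction t with
    | zero =>
      refine ⟨D, h0D, fun z hz => SparseAux.mem_kFoldN_one.2 hz, ?_⟩
      intro x hx
      have hD1 := hDcnt x hx
      have heq : (1 - (1-γ)^(0+1)) * (x:ℝ) = γ * x := by ring
      rw [heq]
      exact hD1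
    | succ t ih =>
      obtain ⟨E, h0E, hEk, hEcnt⟩ := ih
      refine ⟨SparseAux.sumset2 E D, SparseAux.mem_sumset2.2 ⟨0, h0E, 0, h0D, rfl⟩, ?_, ?_⟩
      · intro z hz
        obtain ⟨uu, hu, vv, hv, rfl⟩ := SparseAux.mem_sumset2.1 hz
        exact SparseAux.add_mem_kFoldN (hEk uu hu) (SparseAux.mem_kFoldN_one.2 hv)
      · intro x hx
        have hb := SparseAux.boost (a := 1 - (1-γ)^(t+1)) hγpos.le hγ1 h0E h0D hEcnt hDcnt x hx
        have heq : (1 - (1-γ)^(t+1+1)) * (x:ℝ) =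
            ((1 - (1-γ)^(t+1)) + γ - (1 - (1-γ)^(t+1)) * γ) * x := by ring
        rw [heq]
        exact hb
  obtain ⟨T, hT⟩ := exists_pow_lt_of_lt_one (show (0:ℝ) < 1/2 by norm_num)
    (show 1 - γ < 1 by linarith)
  obtain ⟨F, h0F, hFk, hFcnt⟩ := hEs T
  have hr0 : (0:ℝ) ≤ 1 - γ := by linarith
  have hFhalf : ∀ x : ℕ, 1 ≤ x → (x:ℝ) ≤ 2 * SparseAux.cnt F x := by
    intro x hx
    have h1 := hFcnt x hx
    have h2 : (1-γ)^(T+1) ≤ (1-γ)^T := by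
      rw [pow_succ]
      nlinarith [pow_nonneg hr0 T]
    have hxR : (0:ℝ) ≤ x := Nat.cast_nonneg x
    nlinarith [mul_le_mul_of_nonneg_right
      (show (1:ℝ)/2 ≤ 1 - (1-γ)^(T+1) by nlinarith) hxR]
  have hrep := SparseAux.complete h0F hFhalf
  -- translate the full sumset back into folds of C'
  set J := (T + 1) + (T + 1) with hJdef
  set m1 := k * h0 + 1 with hm1def
  have hint : ∀ K j : ℕ, j ≤ K → K * q0 + j ∈ kFoldN (kFoldN C' h0) K := by
    intro K
    induction K with
    | zero =>
      intro j hj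
      have hj0 : j = 0 := by omega
      subst hj0
      simpa using SparseAux.zero_mem_kFoldN_zero (kFoldN C' h0)
    | succ K ih =>
      intro j hj
      rcases Nat.lt_or_ge j (K + 1) with hlt | hge
      · have hmem := SparseAux.add_mem_kFoldN (ih j (by omega))
          (SparseAux.mem_kFoldN_one (X := kFoldN C' h0) |>.2 hq0mem)
        rwa [show K * q0 + j + q0 = (K+1) * q0 + j by ring] at hmem
      · have hj' : j = K + 1 := by omega
        subst hj'
        have hmem := SparseAux.add_mem_kFoldN (ih K le_rfl)
          (SparseAux.mem_kFoldN_one (X := kFoldN C' h0) |>.2 hq1mem)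
        rwa [show K * q0 + K + (q0 + 1) = (K+1) * q0 + (K+1) by ring] at hmem
  have hDmem : ∀ d ∈ D, k * q0 + d ∈ kFoldN C' m1 := by
    intro d hd
    rcases hd with hdC' | hdk
    · have h1 : k * q0 ∈ kFoldN C' (k * h0) := by
        have := SparseAux.kFoldN_comp (hint k 0 (Nat.zero_le k))
        simpa using this
      exact SparseAux.add_mem_kFoldN h1 (SparseAux.mem_kFoldN_one.2 hdC')
    · have hdk' : d ≤ k := hdk
      have h1 := SparseAux.kFoldN_comp (hint k d hdk')
      exact SparseAux.kFoldN_le h0C' (Nat.le_succ _) h1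
  have hmap : ∀ (Mz zz : ℕ), zz ∈ kFoldN D Mz →
      Mz * (k * q0) + zz ∈ kFoldN C' (Mz * m1) := by
    rintro Mz zz ⟨fw, hfw, rfl⟩
    have hmem : (∑ i : Fin Mz, (k * q0 + fw i)) ∈ kFoldN (kFoldN C' m1) Mz :=
      ⟨fun i => k * q0 + fw i, fun i => hDmem _ (hfw i), rfl⟩
    have heq : (∑ i : Fin Mz, (k * q0 + fw i)) = Mz * (k * q0) + ∑ i, fw i := by
      rw [Finset.sum_add_distrib, Finset.sum_const, Finset.card_univ, Fintype.card_fin,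
        smul_eq_mul]
    rw [← heq]
    exact SparseAux.kFoldN_comp hmem
  have hbig : ∀ y : ℕ, J * (k * q0) + y ∈ kFoldN C' (J * m1) := by
    intro y
    obtain ⟨uu, hu, vv, hv, rfl⟩ := hrep y
    have h1 := hmap (T+1) uu (hFk uu hu)
    have h2 := hmap (T+1) vv (hFk vv hv)
    have h3 := SparseAux.add_mem_kFoldN h1 h2
    rwa [show (T+1) * (k * q0) + uu + ((T+1) * (k * q0) + vv)
          = J * (k * q0) + (uu + vv) by rw [hJdef]; ring,
        show (T+1) * m1 + (T+1) * m1 = J * m1 by rw [hJdef]; ring] at h3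
  set Mbig := J * m1 with hMdef
  have hMS : ∀ w : ℕ, w ∈ kFoldN C' Mbig → Mbig * s0 + g * w ∈ kFoldN S Mbig := by
    rintro w ⟨fw, hfw, rfl⟩
    refine ⟨fun i => s0 + g * fw i, fun i => ?_, ?_⟩
    · have h1 : fw i ∈ C' := hfw i
      rw [hC'def] at h1
      have h2 : g * fw i ∈ C := h1
      rw [hCdef] at h2
      exact h2
    · rw [Finset.sum_add_distrib, Finset.sum_const, Finset.card_univ, Fintype.card_fin,
        smul_eq_mul, ← Finset.mul_sum]
  have hJpos : 0 < J := by rw [hJdef]; omega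
  have hm1pos : 0 < m1 := by rw [hm1def]; omega
  have hM1 : 1 ≤ Mbig := by
    rw [hMdef]
    exact Nat.one_le_iff_ne_zero.2 (Nat.mul_ne_zero (by omega) (by omega))
  set e0 := Mbig * s0 + g * (J * (k * q0)) with he0def
  have hAP : ∀ y : ℕ, e0 + g * y ∈ sigmaSumN (Mbig * n) A := by
    intro y
    have h1 := hbig y
    have h2 := hMS _ h1
    have h3 : Mbig * s0 + g * (J * (k * q0) + y) ∈ sigmaSumN (Mbig * n) A := by
      rw [hSdef] at h2
      exact SparseAux.kFoldN_sigma_sub hM1 h2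
    rwa [show Mbig * s0 + g * (J * (k * q0) + y) = e0 + g * y by rw [he0def]; ring] at h3
  have hMn : 1 ≤ Mbig * n :=
    Nat.one_le_iff_ne_zero.2 (Nat.mul_ne_zero (by omega) (by omega))
  refine h (Mbig * n) hMn ?_
  intro N
  refine ⟨(e0 : ℤ), (((e0 + 1) * g : ℕ) : ℤ), ?_, ?_, ?_⟩
  · have h1 : 1 ≤ (e0 + 1) * g := Nat.one_le_iff_ne_zero.2 (Nat.mul_ne_zero (by omega) (by omega))
    exact_mod_cast h1
  · intro i hiN
    refine ⟨e0 + g * ((e0 + 1) * i), hAP ((e0 + 1) * i), ?_⟩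
    push_cast
    ring
  · intro i hi1 hiN hmem
    obtain ⟨w, hw, hweq⟩ := hmem
    simp only at hweq
    have hwge : (0:ℤ) ≤ (w:ℤ) := Int.natCast_nonneg _
    have hiZ : (1:ℤ) ≤ (i:ℤ) := by exact_mod_cast hi1
    have hgZ : (1:ℤ) ≤ (g:ℤ) := by exact_mod_cast hg1
    have he0Z : (0:ℤ) ≤ (e0:ℤ) := Int.natCast_nonneg _
    have hcast : (((e0 + 1) * g : ℕ) : ℤ) = ((e0:ℤ) + 1) * (g:ℤ) := by push_cast; ring
    rw [hcast] at hweq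
    have hig : (1:ℤ) ≤ (i:ℤ) * (g:ℤ) := by nlinarith
    have hkey : ((e0:ℤ) + 1) * 1 ≤ ((e0:ℤ) + 1) * ((i:ℤ) * (g:ℤ)) :=
      mul_le_mul_of_nonneg_left hig (by linarith)
    nlinarith
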